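/- arXiv:1403.6909 — 3 statements merged into one kernel-verified Lean document; each statement's English description precedes it below -/
import Mathlib

section
/- Let V be a real vector space, let I₀, I₁ : V → V be linear maps, let Q : V* → V be a skew linear map (ξ(Qη) = -η(Qξ) for all ξ, η ∈ V*), and let B : V → V* be a skew linear map ((Bx)(y) = -(By)(x) for all x, y ∈ V). Then e^B ∘ 𝕁_{I₀,Q} ∘ e^{-B} = 𝕁_{I₁,Q} as endomorphisms of V × V* if and only if both (i) I₁ = I₀ + Q ∘ B and (ii) (Bx)(I₀y) + (B(I₁x))(y) = 0 for all x, y ∈ V. -/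
/-- The B-field transform `e^B : V × V* → V × V*`, `(x, ξ) ↦ (x, ξ + Bx)`. -/
def bFieldTransform {V : Type*} [AddCommGroup V] [Module ℝ V]
    (B : V →ₗ[ℝ] Module.Dual ℝ V) (p : V × Module.Dual ℝ V) :
    V × Module.Dual ℝ V :=
  (p.1, p.2 + B p.1)

/-- The block upper-triangular map `𝕁_{I,Q} : (x, ξ) ↦ (-Ix + Qξ, ξ ∘ I)`. -/
def Jblock {V : Type*} [AddCommGroup V] [Module ℝ V]
    (I : V →ₗ[ℝ] V) (Q : Module.Dual ℝ V →ₗ[ℝ] V) (p : V × Module.Dual ℝ V) :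
    V × Module.Dual ℝ V :=
  (-(I p.1) + Q p.2, LinearMap.comp p.2 I)

theorem gauge_equivalence_iff
    {V : Type*} [AddCommGroup V] [Module ℝ V]
    (I₀ I₁ : V →ₗ[ℝ] V)
    (Q : Module.Dual ℝ V →ₗ[ℝ] V)
    (hQ : ∀ ξ η : Module.Dual ℝ V, ξ (Q η) = -η (Q ξ))
    (B : V →ₗ[ℝ] Module.Dual ℝ V)
    (hB : ∀ x y : V, B x y = -(B y x)) :
    (∀ p : V × Module.Dual ℝ V,
        bFieldTransform B (Jblock I₀ Q (bFieldTransform (-B) p)) = Jblock I₁ Q p)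
      ↔ (I₁ = I₀ + Q ∘ₗ B ∧ ∀ x y : V, B x (I₀ y) + B (I₁ x) y = 0) := by
  simp only [bFieldTransform, Jblock, Prod.mk.injEq, Prod.forall]
  constructor
  · intro h
    have h1 : I₁ = I₀ + Q ∘ₗ B := by
      ext x
      have := (h x 0).1
      simp only [LinearMap.neg_apply, zero_add, map_neg, map_zero, add_zero] at this
      simp only [LinearMap.add_apply, LinearMap.comp_apply]
      have : -I₀ x + -Q (B x) = -I₁ x := by simpa using this
      linear_combination (norm := module) this
    refine ⟨h1, fun x y => ?_⟩
    have := (h x 0).2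
    have h2 := congrFun (congrArg (fun f : Module.Dual ℝ V => (f : V → ℝ)) this) y
    simp only [LinearMap.add_apply, LinearMap.neg_apply, LinearMap.comp_apply,
      LinearMap.zero_apply, zero_add, map_neg, map_zero, add_zero,
      LinearMap.zero_comp] at h2
    have hI1 : I₁ x = I₀ x + Q (B x) := by rw [h1]; simp
    simp only [map_add, map_neg, LinearMap.add_apply, LinearMap.neg_apply] at h2
    rw [hI1, map_add, LinearMap.add_apply]
    linarith [h2]
  · rintro ⟨h1, h2⟩ x ξ
    constructor
    · rw [h1]
      simp only [LinearMap.neg_apply, map_add, LinearMap.add_apply, LinearMap.comp_apply,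
        map_neg]
      abel
    · ext y
      simp only [LinearMap.add_apply, LinearMap.comp_apply, LinearMap.neg_apply,
        map_add, map_neg]
      have hI1 : I₁ y = I₀ y + Q (B y) := by rw [h1]; simp
      have hBQ : B (Q ξ) y = ξ (Q (B y)) := by
        rw [hB (Q ξ) y, hQ ξ (B y)]
      have h2' := h2 x y
      have hI1x : I₁ x = I₀ x + Q (B x) := by rw [h1]; simp
      rw [hI1x, map_add, LinearMap.add_apply] at h2'
      rw [hI1, map_add]
      linarith [h2', hBQ]
end

section
/- Let V be a finite-dimensional real normed vector space, let Q : V* → V be a skew linear map (ξ(Qη) = -η(Qξ) for all ξ, η ∈ V*), let I₀ : V → V be linear, and let B : ℝ → Hom(V, V*) be a differentiable family of linear maps such that each B_t is skew ((B_t x)(y) = -(B_t y)(x) for all x, y). Define I_t := I₀ + Q ∘ B_t, and assume that for every t ∈ ℝ and all x, y ∈ V one has (B_t x)(I₀ y) + (B_t(I_t x))(y) = 0. Then for every t and all x, y ∈ V, the derivative B'_t := (d/dt)B_t satisfies (B'_t x)(I_t y) + (B'_t(I_t x))(y) = 0; that is, B'_t is of type (1,1) with respect to I_t. -/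
theorem deriv_B_type_one_one
    {E : Type*} [NormedAddCommGroup E] [NormedSpace ℝ E] [FiniteDimensional ℝ E]
    (Q : (E →L[ℝ] ℝ) →L[ℝ] E)
    (hQ : ∀ ξ η : E →L[ℝ] ℝ, ξ (Q η) = -η (Q ξ))
    (I₀ : E →L[ℝ] E)
    (B : ℝ → E →L[ℝ] (E →L[ℝ] ℝ))
    (hBdiff : Differentiable ℝ B)
    (hBskew : ∀ (t : ℝ) (x y : E), B t x y = -(B t y x))
    (I : ℝ → E →L[ℝ] E)
    (hI : ∀ t : ℝ, I t = I₀ + Q.comp (B t))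
    (hgauge : ∀ (t : ℝ) (x y : E), B t x (I₀ y) + B t (I t x) y = 0) :
    ∀ (t : ℝ) (x y : E),
      deriv B t x (I t y) + deriv B t (I t x) y = 0 := by
  intro t x y
  set b := B t with hb
  set b' := deriv B t with hb'
  have hB' : HasDerivAt B b' t :=
    DifferentiableAt.hasDerivAt (𝕜 := ℝ) (F := E →L[ℝ] (E →L[ℝ] ℝ)) (hBdiff t)
  -- derivative of s ↦ B s x
  have h1 : HasDerivAt (fun s => B s x) (b' x) t := by
    simpa using hB'.clm_apply (hasDerivAt_const t x)
  have h1' : HasDerivAt (fun s => B s (I₀ x)) (b' (I₀ x)) t := by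
    simpa using hB'.clm_apply (hasDerivAt_const t (I₀ x))
  have h2 : HasDerivAt (fun s => B s x (I₀ y)) (b' x (I₀ y)) t := by
    simpa using h1.clm_apply (hasDerivAt_const t (I₀ y))
  have h3 : HasDerivAt (fun s => B s (I₀ x) y) (b' (I₀ x) y) t := by
    simpa using h1'.clm_apply (hasDerivAt_const t y)
  have hu : HasDerivAt (fun s => Q (B s x)) (Q (b' x)) t := by
    simpa using (hasDerivAt_const t Q).clm_apply h1
  have h4 : HasDerivAt (fun s => B s (Q (B s x))) (b' (Q (b x)) + b (Q (b' x))) t :=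
    hB'.clm_apply hu
  have h5 : HasDerivAt (fun s => B s (Q (B s x)) y)
      (b' (Q (b x)) y + b (Q (b' x)) y) t := by
    simpa using h4.clm_apply (hasDerivAt_const t y)
  have hf : HasDerivAt (fun s => B s x (I₀ y) + B s (I₀ x) y + B s (Q (B s x)) y)
      (b' x (I₀ y) + b' (I₀ x) y + (b' (Q (b x)) y + b (Q (b' x)) y)) t :=
    (h2.add h3).add h5
  have hf0 : (fun s => B s x (I₀ y) + B s (I₀ x) y + B s (Q (B s x)) y)
      = fun _ => (0 : ℝ) := by
    funext s
    have h := hgauge s x y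
    rw [hI s] at h
    simpa [add_assoc] using h
  have hzero : HasDerivAt (fun s => B s x (I₀ y) + B s (I₀ x) y + B s (Q (B s x)) y)
      (0 : ℝ) t := by
    rw [hf0]; exact hasDerivAt_const t 0
  have heq := hf.unique hzero
  have key : b (Q (b' x)) y = b' x (Q (b y)) := by
    rw [hBskew t (Q (b' x)) y, hQ (b y) (b' x)]
    ring
  rw [hI t]
  simp only [ContinuousLinearMap.add_apply, ContinuousLinearMap.coe_comp',
    Function.comp_apply, map_add]
  linarith [heq, key]
end

section
/- Let E be a finite-dimensional real normed vector space, let U ⊆ E be open, let p ∈ U, and let X : ℝ × U → E be a continuously differentiable time-dependent vector field with X(t, p) = 0 for all t ∈ [0,1]. Then there exists an open neighbourhood V of p with V ⊆ U such that for every x ∈ V there is a map φ : [0,1] → U with φ(0) = x and, for every t ∈ [0,1], φ has derivative X(t, φ(t)) at t (derivative within [0,1]); that is, the flow of X_t starting at any point of V is defined for all t ∈ [0,1] and stays in U. -/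
open Set Metric NNReal

lemma hasDerivWithinAt_singleton' {E : Type*} [NormedAddCommGroup E] [NormedSpace ℝ E]
    (f : ℝ → E) (x : ℝ) (v : E) : HasDerivWithinAt f v {x} x := by
  rw [hasDerivWithinAt_iff_hasFDerivWithinAt]
  simp only [HasFDerivWithinAt, nhdsWithin_singleton, hasFDerivAtFilter_iff_isLittleO,
    Asymptotics.isLittleO_pure, ContinuousLinearMap.smulRight_apply, sub_self, zero_smul,
    ContinuousLinearMap.one_apply, smul_zero, Filter.prod_pure_pure, map_zero]

structure IsPicardLindelofOld {E : Type*} [NormedAddCommGroup E] (v : ℝ → E → E)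
    (tMin t₀ tMax : ℝ) (x₀ : E) (L : ℝ≥0) (R C : ℝ) : Prop where
  ht₀ : t₀ ∈ Icc tMin tMax
  hR : 0 ≤ R
  lipschitz : ∀ t ∈ Icc tMin tMax, LipschitzOnWith L (v t) (closedBall x₀ R)
  cont : ∀ x ∈ closedBall x₀ R, ContinuousOn (fun t : ℝ => v t x) (Icc tMin tMax)
  norm_le : ∀ t ∈ Icc tMin tMax, ∀ x ∈ closedBall x₀ R, ‖v t x‖ ≤ C
  C_mul_le_R : (C : ℝ) * max (tMax - t₀) (t₀ - tMin) ≤ R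

lemma pl_exists_mem {E : Type*} [NormedAddCommGroup E] [NormedSpace ℝ E] [CompleteSpace E]
    {v : ℝ → E → E} {tMin t₀ tMax : ℝ} (x₀ : E) {C R : ℝ} {L : ℝ≥0}
    (hpl : IsPicardLindelofOld v tMin t₀ tMax x₀ L R C) :
    ∃ f : ℝ → E, f t₀ = x₀ ∧ ∀ t ∈ Icc tMin tMax,
      f t ∈ closedBall x₀ R ∧ HasDerivWithinAt f (v t (f t)) (Icc tMin tMax) t := by
  lift C to ℝ≥0 using (norm_nonneg _).trans (hpl.norm_le t₀ hpl.ht₀ x₀ (mem_closedBall_self hpl.hR))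
  lift R to ℝ≥0 using hpl.hR
  set t0 : Icc tMin tMax := ⟨t₀, hpl.ht₀⟩ with ht0
  have hf : IsPicardLindelof v t0 x₀ R 0 C L :=
    { lipschitzOnWith := hpl.lipschitz, continuousOn := hpl.cont, norm_le := hpl.norm_le,
      mul_max_le := by simpa using hpl.C_mul_le_R }
  obtain ⟨α, hα⟩ := ODE.FunSpace.exists_isFixedPt_next hf (mem_closedBall_self le_rfl)
  refine ⟨α.compProj, ?_, fun t ht => ⟨α.compProj_mem_closedBall hf.mul_max_le, ?_⟩⟩
  · show α.compProj (t0 : ℝ) = x₀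
    rw [ODE.FunSpace.compProj_val, ← hα, ODE.FunSpace.next_apply₀]
  · apply ODE.hasDerivWithinAt_picard_Icc t0.2 hf.continuousOn_uncurry
      α.continuous_compProj.continuousOn (fun _ ht' ↦ α.compProj_mem_closedBall hf.mul_max_le)
      x₀ ht |>.congr_of_mem _ ht
    intro t' ht'
    nth_rw 1 [← hα]
    rw [ODE.FunSpace.compProj_of_mem ht', ODE.FunSpace.next_apply]

set_option maxHeartbeats 1000000 in
theorem flow_exists_near_zero_of_vector_field
    {E : Type*} [NormedAddCommGroup E] [NormedSpace ℝ E] [FiniteDimensional ℝ E]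
    (U : Set E) (hU : IsOpen U) (p : E) (hp : p ∈ U)
    (X : ℝ → E → E)
    (hX : ContDiffOn ℝ 1 (fun q : ℝ × E => X q.1 q.2) (Set.univ ×ˢ U))
    (hXp : ∀ t ∈ Set.Icc (0:ℝ) 1, X t p = 0) :
    ∃ V : Set E, IsOpen V ∧ p ∈ V ∧ V ⊆ U ∧
      ∀ x ∈ V, ∃ φ : ℝ → E, φ 0 = x ∧
        ∀ t ∈ Set.Icc (0:ℝ) 1, φ t ∈ U ∧
          HasDerivWithinAt φ (X t (φ t)) (Set.Icc (0:ℝ) 1) t := by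
  -- a closed ball inside U
  obtain ⟨r, hr, hrU⟩ : ∃ r > 0, closedBall p r ⊆ U := by
    rcases Metric.isOpen_iff.mp hU p hp with ⟨ε, hε, hb⟩
    exact ⟨ε/2, by positivity, (closedBall_subset_ball (by linarith)).trans hb⟩
  -- uniform Lipschitz constant on the ball
  have hopen : IsOpen (Set.univ ×ˢ U) := (isOpen_univ : IsOpen (Set.univ : Set ℝ)).prod hU
  set g : ℝ × E → E := fun q => X q.1 q.2 with hg
  have hSsub : (Icc (0:ℝ) 1 ×ˢ closedBall p r) ⊆ Set.univ ×ˢ U :=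
    Set.prod_mono (subset_univ _) hrU
  have hfcont : ContinuousOn (fderiv ℝ g) (Set.univ ×ˢ U) :=
    hX.continuousOn_fderiv_of_isOpen hopen le_rfl
  obtain ⟨M, hM⟩ := ((isCompact_Icc : IsCompact (Icc (0:ℝ) 1)).prod (isCompact_closedBall p r)).exists_bound_of_continuousOn
    (hfcont.mono hSsub)
  set K := M.toNNReal with hKdef
  have hlipS : LipschitzOnWith K g (Icc (0:ℝ) 1 ×ˢ closedBall p r) :=
    ((convex_Icc _ _).prod (convex_closedBall _ _)).lipschitzOnWith_of_nnnorm_hasFDerivWithin_le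
      (fun q hq => ((hX.differentiableOn one_ne_zero).differentiableAt
        (hopen.mem_nhds (hSsub hq))).hasFDerivAt.hasFDerivWithinAt)
      (fun q hq => by rw [← norm_toNNReal]; exact Real.toNNReal_le_toNNReal (hM q hq))
  have hLip : ∀ t ∈ Icc (0:ℝ) 1, LipschitzOnWith K (X t) (closedBall p r) := by
    intro t ht y hy z hz
    have h := hlipS (Set.mk_mem_prod ht hy) (Set.mk_mem_prod ht hz)
    simpa [g, Prod.edist_eq] using h
  have hK0 : (0:ℝ) ≤ K := K.coe_nonneg
  have hnorm : ∀ t ∈ Icc (0:ℝ) 1, ∀ y ∈ closedBall p r, ‖X t y‖ ≤ K * dist y p := by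
    intro t ht y hy
    have h := (hLip t ht).dist_le_mul y hy p (mem_closedBall_self hr.le)
    rwa [hXp t ht, dist_zero_right] at h
  -- choose n
  obtain ⟨n, hn⟩ := exists_nat_ge (2*(K:ℝ) + 1)
  have hn0 : (0:ℝ) < n := by linarith
  have hn2 : 2*(K:ℝ) ≤ n := by linarith
  obtain ⟨c, hcdef⟩ : ∃ c : ℝ, c = 1 + 2*(K:ℝ)/n := ⟨_, rfl⟩
  have h2Kn : 0 ≤ 2*(K:ℝ)/n := by positivity
  have hc1 : 1 ≤ c := by rw [hcdef]; linarith
  have hc0 : (0:ℝ) < c := by linarith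
  have hcn1 : (1:ℝ) ≤ c^n := one_le_pow₀ hc1
  obtain ⟨δ, hδdef⟩ : ∃ δ : ℝ, δ = r / (2 * c^n) := ⟨_, rfl⟩
  have hδ0 : 0 < δ := by rw [hδdef]; positivity
  have hδck : ∀ k ≤ n, δ * c^k ≤ r/2 := by
    intro k hk
    have h1 : c^k ≤ c^n := pow_le_pow_right₀ hc1 hk
    rw [hδdef, div_mul_eq_mul_div, div_le_div_iff₀ (by positivity) (by norm_num)]
    calc r * c^k * 2 ≤ r * c^n * 2 := by nlinarith
      _ = r * (2*c^n) := by ring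
  have hδr : δ ≤ r := by
    rw [hδdef]
    calc r / (2*c^n) ≤ r / 1 := by
          apply div_le_div_of_nonneg_left hr.le one_pos; linarith
      _ = r := div_one r
  -- the key induction
  refine ⟨ball p δ, isOpen_ball, mem_ball_self hδ0, fun y hy => hrU ((ball_subset_closedBall.trans
    (closedBall_subset_closedBall hδr)) hy), fun x hx => ?_⟩
  have hxδ : dist x p ≤ δ := (mem_ball.mp hx).le
  have key : ∀ k : ℕ, k ≤ n → ∃ φ : ℝ → E, φ 0 = x ∧ ∀ t ∈ Icc (0:ℝ) ((k:ℝ)/n),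
      dist (φ t) p ≤ δ * c^k ∧ HasDerivWithinAt φ (X t (φ t)) (Icc (0:ℝ) ((k:ℝ)/n)) t := by
    intro k hkn
    induction k with
    | zero =>
      refine ⟨fun _ => x, rfl, fun t ht => ?_⟩
      have ht0 : t = 0 := by
        simp only [Nat.cast_zero, zero_div, Icc_self, mem_singleton_iff] at ht
        exact ht
      subst ht0
      constructor
      · simpa using hxδ
      · simp only [Nat.cast_zero, zero_div, Icc_self]
        exact hasDerivWithinAt_singleton' _ _ _
    | succ k ih =>
      have hk : k ≤ n := Nat.le_of_succ_le hkn
      obtain ⟨φ, hφ0, hφ⟩ := ih hk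
      have hknn : (0:ℝ) ≤ (k:ℝ)/n := by positivity
      have hkk1 : (k:ℝ)/n ≤ ((k:ℝ)+1)/n := by gcongr; linarith
      have hk1n : ((k:ℝ)+1) ≤ n := by exact_mod_cast hkn
      have hsub01 : Icc ((k:ℝ)/n) (((k:ℝ)+1)/n) ⊆ Icc (0:ℝ) 1 := by
        apply Icc_subset_Icc hknn
        rw [div_le_one hn0]
        exact hk1n
      set x₁ : E := φ ((k:ℝ)/n) with hx₁
      have hmemk : (k:ℝ)/n ∈ Icc (0:ℝ) ((k:ℝ)/n) := ⟨hknn, le_rfl⟩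
      obtain ⟨D, hD⟩ : ∃ D : ℝ, D = δ * c^k := ⟨_, rfl⟩
      have hd : dist x₁ p ≤ D := by rw [hD]; exact (hφ _ hmemk).1
      have hD0 : 0 ≤ D := by rw [hD]; positivity
      obtain ⟨R, hR⟩ : ∃ R : ℝ, R = 2*(K:ℝ)*D/n := ⟨_, rfl⟩
      have hR0 : 0 ≤ R := by rw [hR]; positivity
      have hDR : D + R = δ * c^(k+1) := by
        rw [hR, hD, hcdef, pow_succ]
        field_simp
      have hDRr : D + R ≤ r/2 := hDR ▸ hδck (k+1) hkn
      have hsubB : closedBall x₁ R ⊆ closedBall p r := by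
        intro y hy
        rw [mem_closedBall] at *
        calc dist y p ≤ dist y x₁ + dist x₁ p := dist_triangle _ _ _
          _ ≤ R + D := add_le_add hy hd
          _ ≤ r := by linarith
      have h2Kn1 : 2*(K:ℝ)/n ≤ 1 := by rw [div_le_one hn0]; exact hn2
      have hpl : IsPicardLindelofOld X ((k:ℝ)/n) ((k:ℝ)/n) (((k:ℝ)+1)/n) x₁ K R ((K:ℝ)*(D+R)) :=
        { ht₀ := ⟨le_rfl, hkk1⟩
          hR := hR0
          lipschitz := fun t ht => (hLip t (hsub01 ht)).mono hsubB
          cont := fun y hy =>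
            hX.continuousOn.comp ((continuous_id.prodMk continuous_const).continuousOn)
              (fun t _ => Set.mk_mem_prod (mem_univ t) (hrU (hsubB hy)))
          norm_le := fun t ht y hy => by
            have h1 := hnorm t (hsub01 ht) y (hsubB hy)
            have h2 : dist y p ≤ D + R := by
              calc dist y p ≤ dist y x₁ + dist x₁ p := dist_triangle _ _ _
                _ ≤ R + D := add_le_add (mem_closedBall.mp hy) hd
                _ = D + R := by ring
            calc ‖X t y‖ ≤ K * dist y p := h1
              _ ≤ K * (D+R) := by nlinarith
          C_mul_le_R := by
            have hmax : max (((k:ℝ)+1)/n - (k:ℝ)/n) ((k:ℝ)/n - (k:ℝ)/n) = 1/n := by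
              rw [max_eq_left (by linarith)]
              field_simp
              ring
            rw [hmax]
            have e1 : (K:ℝ)*(D+R)*(1/n) = (K*D/n) * (1 + 2*K/n) := by
              rw [hR]; field_simp
            have e2 : R = (K*D/n) * 2 := by rw [hR]; ring
            rw [e1, e2]
            apply mul_le_mul_of_nonneg_left (by linarith) (by positivity) }
      obtain ⟨f, hf0, hf⟩ := pl_exists_mem x₁ hpl
      set ψ : ℝ → E := fun t => if t ≤ (k:ℝ)/n then φ t else f t with hψ
      have hψφ : EqOn ψ φ (Icc (0:ℝ) ((k:ℝ)/n)) := fun t ht => if_pos ht.2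
      have hψf : EqOn ψ f (Icc ((k:ℝ)/n) (((k:ℝ)+1)/n)) := by
        intro t ht
        rcases eq_or_lt_of_le ht.1 with h | h
        · rw [← h]
          show (if (k:ℝ)/n ≤ (k:ℝ)/n then φ ((k:ℝ)/n) else f ((k:ℝ)/n)) = f ((k:ℝ)/n)
          rw [if_pos le_rfl, hf0]
        · exact if_neg (not_le.mpr h)
      refine ⟨ψ, ?_, fun t ht' => ?_⟩
      · show (if (0:ℝ) ≤ (k:ℝ)/n then φ 0 else f 0) = x
        rw [if_pos hknn, hφ0]
      · have ht : t ∈ Icc (0:ℝ) (((k:ℝ)+1)/n) := by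
          convert ht' using 2
          push_cast
          ring
        constructor
        · by_cases h : t ≤ (k:ℝ)/n
          · have htk : t ∈ Icc (0:ℝ) ((k:ℝ)/n) := ⟨ht.1, h⟩
            rw [hψφ htk]
            calc dist (φ t) p ≤ δ * c^k := (hφ t htk).1
              _ ≤ δ * c^(k+1) :=
                  mul_le_mul_of_nonneg_left (pow_le_pow_right₀ hc1 (Nat.le_succ k)) hδ0.le
          · have htk : t ∈ Icc ((k:ℝ)/n) (((k:ℝ)+1)/n) := ⟨(not_le.mp h).le, ht.2⟩
            rw [hψf htk, ← hDR]
            calc dist (f t) p ≤ dist (f t) x₁ + dist x₁ p := dist_triangle _ _ _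
              _ ≤ R + D := add_le_add (mem_closedBall.mp (hf t htk).1) hd
              _ = D + R := add_comm R D
        · have h1 : HasDerivWithinAt ψ (X t (ψ t)) (Icc (0:ℝ) ((k:ℝ)/n)) t := by
            by_cases h : t ≤ (k:ℝ)/n
            · have htk : t ∈ Icc (0:ℝ) ((k:ℝ)/n) := ⟨ht.1, h⟩
              have hd1 := (hφ t htk).2.congr hψφ (hψφ htk)
              rwa [← hψφ htk] at hd1
            · refine hasDerivWithinAt_iff_hasFDerivWithinAt.mpr
                (HasFDerivWithinAt.of_notMem_closure ?_)
              rw [IsClosed.closure_eq isClosed_Icc]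
              exact fun hc => h hc.2
          have h2 : HasDerivWithinAt ψ (X t (ψ t)) (Icc ((k:ℝ)/n) (((k:ℝ)+1)/n)) t := by
            by_cases h : (k:ℝ)/n ≤ t
            · have htk : t ∈ Icc ((k:ℝ)/n) (((k:ℝ)+1)/n) := ⟨h, ht.2⟩
              have hd2 := (hf t htk).2.congr hψf (hψf htk)
              rwa [← hψf htk] at hd2
            · refine hasDerivWithinAt_iff_hasFDerivWithinAt.mpr
                (HasFDerivWithinAt.of_notMem_closure ?_)
              rw [IsClosed.closure_eq isClosed_Icc]
              exact fun hc => h hc.1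
          have h3 := h1.union h2
          rw [Set.Icc_union_Icc_eq_Icc hknn hkk1] at h3
          convert h3 using 2
          · rfl
          push_cast
          ring
  obtain ⟨φ, hφ0, hφ⟩ := key n le_rfl
  have hnn : ((n:ℝ))/n = 1 := div_self hn0.ne'
  rw [hnn] at hφ
  refine ⟨φ, hφ0, fun t ht => ⟨?_, (hφ t ht).2⟩⟩
  exact hrU (mem_closedBall.mpr ((hφ t ht).1.trans (by linarith [hδck n le_rfl])))
end
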